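/- Let w ∈ S_n with permutation matrix P (so P·e_j = e_{w(j)}), let d_1,…,d_n ∈ F^×, and set m := P·diag(d_1,…,d_n) ∈ GL_n(F). Let x ∈ ℚ^n. Then: (i) the matrix u := m·x̃·m^{-1} − τ(m)·m^{-1} is diagonal, and its (w(j),w(j)) entry lies in x_j − ord(d_j) + z·k[[z]]; (ii) if moreover each d_j = c_j·z^{a_j} with c_j ∈ k^× and a_j ∈ ℤ, then m·g_x(r)·m^{-1} = g_y(r) for every r ∈ ℚ, where y ∈ ℚ^n is defined by y_{w(j)} = x_j − a_j. -/

import Mathlib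

noncomputable section

open Polynomial Matrix

variable {k : Type*} [Field k]

/-- The derivation `τ = z·d/dz` on `k((z))`, acting coefficientwise by `n`. -/
def tauF (f : LaurentSeries k) : LaurentSeries k :=
  ⟨fun n => (n : k) * f.coeff n,
    f.isPWO_support'.mono (fun n hn => by
      simp only [Function.mem_support, ne_eq] at hn ⊢
      exact fun h => hn (by rw [h, mul_zero]))⟩

/-- For `x ∈ ℚ^n`, the constant diagonal matrix `x̃ = diag(x₁, …, xₙ)`. -/
def diagQ {n : ℕ} (x : Fin n → ℚ) : Matrix (Fin n) (Fin n) (LaurentSeries k) :=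
  Matrix.diagonal fun i => HahnSeries.C ((x i : k))

/-- The Moy–Prasad graded piece `g_x(r)`: the span of the `E_{ij}·z^m` with
`m + x_i − x_j = r`. -/
def Gr {n : ℕ} (x : Fin n → ℚ) (r : ℚ) : Set (Matrix (Fin n) (Fin n) (LaurentSeries k)) :=
  {A | ∀ i j, ∀ m : ℤ, (A i j).coeff m ≠ 0 → (m : ℚ) + x i - x j = r}

namespace Stmt7Aux

lemma tauF_coeff (f : LaurentSeries k) (m : ℤ) : (tauF f).coeff m = (m : k) * f.coeff m := rfl

lemma tauF_zero : (tauF (0 : LaurentSeries k)) = 0 := by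
  ext m; simp [tauF_coeff]

lemma single_mul_coeff' (b : ℤ) (r : k) (f : LaurentSeries k) (m : ℤ) :
    (HahnSeries.single b r * f).coeff m = r * f.coeff (m - b) := by
  have h := HahnSeries.coeff_single_mul_add (r := r) (x := f) (a := m - b) (b := b)
  simpa using h

lemma mul_single_coeff' (b : ℤ) (r : k) (f : LaurentSeries k) (m : ℤ) :
    (f * HahnSeries.single b r).coeff m = f.coeff (m - b) * r := by
  have h := HahnSeries.coeff_mul_single_add (r := r) (x := f) (a := m - b) (b := b)
  simpa using h

lemma logderiv (f : LaurentSeries k) (hf : f ≠ 0) (m : ℤ) (hm : m ≤ 0) :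
    (HahnSeries.C ((f.order : k)) - tauF f * f⁻¹).coeff m = 0 := by
  set o : ℤ := f.order with ho
  set g : LaurentSeries k := tauF f - HahnSeries.C ((o : k)) * f with hg
  have key : HahnSeries.C ((o : k)) - tauF f * f⁻¹ = -(g * f⁻¹) := by
    rw [hg, sub_mul, mul_assoc, mul_inv_cancel₀ hf, mul_one]
    ring
  rw [key]
  by_cases hg0 : g = 0
  · simp [hg0]
  · have h1 : ∀ nn : ℤ, nn ≤ o → g.coeff nn = 0 := by
      intro nn h
      have : g.coeff nn = ((nn : k) - (o : k)) * f.coeff nn := by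
        rw [hg, HahnSeries.coeff_sub, tauF_coeff]
        rw [show (HahnSeries.C ((o:k)) : LaurentSeries k) = HahnSeries.single 0 ((o:k)) from rfl,
          single_mul_coeff']
        ring_nf
      rcases lt_or_eq_of_le h with h' | h'
      · rw [this, HahnSeries.coeff_eq_zero_of_lt_order (ho ▸ h'), mul_zero]
      · rw [this, h']; ring
    have hord : o < g.order := by
      by_contra hcon
      push_neg at hcon
      exact (mt HahnSeries.coeff_order_eq_zero.mp hg0) (h1 _ hcon)
    have hfi : f⁻¹ ≠ 0 := inv_ne_zero hf
    have hsum : f.order + f⁻¹.order = 0 := by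
      rw [← HahnSeries.order_mul hf hfi, mul_inv_cancel₀ hf, HahnSeries.order_one]
    have : (g * f⁻¹).order = g.order + f⁻¹.order := HahnSeries.order_mul hg0 hfi
    have hlt : m < (g * f⁻¹).order := by omega
    simp [HahnSeries.coeff_eq_zero_of_lt_order hlt]

lemma single_inv' (a : ℤ) {r : k} (hr : r ≠ 0) :
    (HahnSeries.single a r : LaurentSeries k)⁻¹ = HahnSeries.single (-a) r⁻¹ := by
  symm
  apply eq_inv_of_mul_eq_one_right
  rw [HahnSeries.single_mul_single]
  simp [hr]

end Stmt7Aux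

open Stmt7Aux

/-- for `m = P·diag(d₁,…,dₙ)` with `P` the permutation matrix of `w`
(`P·e_j = e_{w(j)}`) and `d_j ∈ F^×`: (i) `u := m·x̃·m⁻¹ − τ(m)·m⁻¹` is diagonal with
`(w(j),w(j))` entry in `x_j − ord(d_j) + z·k[[z]]`; (ii) if each `d_j = c_j·z^{a_j}` then
`m·g_x(r)·m⁻¹ = g_y(r)` for all `r`, where `y_{w(j)} = x_j − a_j`. -/
theorem stmt7 [IsAlgClosed k] [CharZero k] {n : ℕ}
    (w : Equiv.Perm (Fin n)) (x : Fin n → ℚ) (d : Fin n → LaurentSeries k)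
    (hd : ∀ j, d j ≠ 0)
    (P : Matrix (Fin n) (Fin n) (LaurentSeries k))
    (hP : P = Matrix.of fun i j => if i = w j then 1 else 0)
    (mm : Matrix (Fin n) (Fin n) (LaurentSeries k))
    (hm : mm = P * Matrix.diagonal d)
    (u : Matrix (Fin n) (Fin n) (LaurentSeries k))
    (hu : u = mm * diagQ x * mm⁻¹ - (mm.map tauF) * mm⁻¹) :
    -- (i) u is diagonal ...
    (∀ i j, i ≠ j → u i j = 0) ∧
    -- ... with (w j, w j) entry in  x_j − ord(d_j) + z·k[[z]]
    (∀ j : Fin n, ∀ mz : ℤ, mz ≤ 0 →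
      (u (w j) (w j) -
        HahnSeries.C (((x j - (((d j).order : ℤ) : ℚ)) : ℚ) : k)).coeff mz = 0) ∧
    -- (ii)
    (∀ (a : Fin n → ℤ) (c : Fin n → k), (∀ j, c j ≠ 0) →
      (∀ j, d j = HahnSeries.single (a j) (c j)) →
      ∀ r : ℚ, (fun A => mm * A * mm⁻¹) '' (Gr x r)
        = Gr (fun i => x (w⁻¹ i) - (a (w⁻¹ i) : ℚ)) r) := by
  
  classical
  -- entry formula for mm
  have hmE : ∀ i j, mm i j = if i = w j then d j else 0 := by
    intro i j
    rw [hm, hP, Matrix.mul_diagonal, Matrix.of_apply]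
    split <;> simp
  set N : Matrix (Fin n) (Fin n) (LaurentSeries k) :=
    Matrix.of (fun i j => if j = w i then (d i)⁻¹ else 0) with hNdef
  have hNE : ∀ i j, N i j = if j = w i then (d i)⁻¹ else 0 := fun i j => rfl
  have hmulN : mm * N = 1 := by
    ext i j
    rw [Matrix.mul_apply, Finset.sum_eq_single (w⁻¹ i)]
    · rw [hmE, hNE]
      by_cases h : i = j
      · subst h
        simp [Equiv.apply_symm_apply, mul_inv_cancel₀ (hd (w.symm i)), Matrix.one_apply]
      · simp [Equiv.apply_symm_apply, h, Ne.symm h, Matrix.one_apply]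
    · intro b _ hb
      rw [hmE]
      have : ¬ i = w b := fun h => hb (by simp [h])
      simp [this]
    · simp
  have hNmm : N * mm = 1 := mul_eq_one_comm.mp hmulN
  have hinv : mm⁻¹ = N := Matrix.inv_eq_right_inv hmulN
  -- product formulas
  have hL : ∀ (A : Matrix (Fin n) (Fin n) (LaurentSeries k)) i j,
      (mm * A) i j = d (w⁻¹ i) * A (w⁻¹ i) j := by
    intro A i j
    rw [Matrix.mul_apply, Finset.sum_eq_single (w⁻¹ i)]
    · rw [hmE]; simp [Equiv.apply_symm_apply]
    · intro b _ hb
      rw [hmE]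
      have : ¬ i = w b := fun h => hb (by simp [h])
      simp [this]
    · simp
  have hR : ∀ (A : Matrix (Fin n) (Fin n) (LaurentSeries k)) i j,
      (A * N) i j = A i (w⁻¹ j) * (d (w⁻¹ j))⁻¹ := by
    intro A i j
    rw [Matrix.mul_apply, Finset.sum_eq_single (w⁻¹ j)]
    · rw [hNE]; simp [Equiv.apply_symm_apply]
    · intro b _ hb
      rw [hNE]
      have : ¬ j = w b := fun h => hb (by simp [h])
      simp [this]
    · simp
  have hL' : ∀ (A : Matrix (Fin n) (Fin n) (LaurentSeries k)) i j,
      (N * A) i j = (d i)⁻¹ * A (w i) j := by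
    intro A i j
    rw [Matrix.mul_apply, Finset.sum_eq_single (w i)]
    · rw [hNE]; simp
    · intro b _ hb
      rw [hNE, if_neg hb, zero_mul]
    · simp
  have hR' : ∀ (A : Matrix (Fin n) (Fin n) (LaurentSeries k)) i j,
      (A * mm) i j = A i (w j) * d j := by
    intro A i j
    rw [Matrix.mul_apply, Finset.sum_eq_single (w j)]
    · rw [hmE]; simp
    · intro b _ hb
      rw [hmE, if_neg hb, mul_zero]
    · simp
  -- entries of u
  have huE : ∀ i j, u i j =
      d (w⁻¹ i) * diagQ x (w⁻¹ i) (w⁻¹ j) * (d (w⁻¹ j))⁻¹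
      - tauF (mm i (w⁻¹ j)) * (d (w⁻¹ j))⁻¹ := by
    intro i j
    rw [hu, hinv, Matrix.sub_apply, hR, hR, hL, Matrix.map_apply]
  have hdiagonal : ∀ i j, i ≠ j → u i j = 0 := by
    intro i j hij
    rw [huE]
    have h1 : diagQ (k := k) x (w⁻¹ i) (w⁻¹ j) = 0 := by
      rw [diagQ, Matrix.diagonal_apply_ne]
      exact fun h => hij (by simpa using congrArg w h)
    have h2 : mm i (w⁻¹ j) = 0 := by
      rw [hmE]
      simp [Equiv.apply_symm_apply, hij]
    rw [h1, h2, tauF_zero]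
    ring
  refine ⟨hdiagonal, ?_, ?_⟩
  · -- (i) second part
    intro j mz hmz
    have hdiag : u (w j) (w j) = HahnSeries.C ((x j : k)) - tauF (d j) * (d j)⁻¹ := by
      have e1 : mm (w j) (w⁻¹ (w j)) = d (w⁻¹ (w j)) := by
        rw [hmE, if_pos (show w j = w (w⁻¹ (w j)) from (w.apply_symm_apply (w j)).symm)]
      rw [huE, e1]
      simp only [Equiv.Perm.inv_def, Equiv.symm_apply_apply]
      rw [diagQ, Matrix.diagonal_apply_eq]
      rw [mul_comm (d j) (HahnSeries.C ((x j : k))), mul_assoc, mul_inv_cancel₀ (hd j), mul_one]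
    rw [hdiag]
    have hcast : ((((x j - (((d j).order : ℤ) : ℚ)) : ℚ)) : k)
        = (x j : k) - (((d j).order : ℤ) : k) := by push_cast; ring
    have : HahnSeries.C ((x j : k)) - tauF (d j) * (d j)⁻¹ -
        HahnSeries.C (((x j - (((d j).order : ℤ) : ℚ)) : ℚ) : k)
        = HahnSeries.C ((((d j).order : ℤ) : k)) - tauF (d j) * (d j)⁻¹ := by
      rw [hcast, map_sub]
      ring
    rw [this]
    exact logderiv (d j) (hd j) mz hmz
  · -- (ii)
    intro a c hc hdc r
    ext B
    simp only [Set.mem_image]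
    constructor
    · rintro ⟨A, hA, rfl⟩
      intro i j m hcoeff
      rw [hinv, hR, hL, hdc, hdc, single_inv' (a (w⁻¹ j)) (hc (w⁻¹ j)),
        mul_single_coeff', single_mul_coeff'] at hcoeff
      have hA' : (A (w⁻¹ i) (w⁻¹ j)).coeff (m - -a (w⁻¹ j) - a (w⁻¹ i)) ≠ 0 := by
        intro h
        rw [h] at hcoeff
        simp at hcoeff
      have := hA (w⁻¹ i) (w⁻¹ j) _ hA'
      push_cast at this ⊢
      linarith
    · intro hB
      refine ⟨N * B * mm, ?_, ?_⟩
      · intro i j m hcoeff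
        rw [hR', hL', hdc, hdc, single_inv' (a i) (hc i),
          mul_single_coeff', single_mul_coeff'] at hcoeff
        have hB' : (B (w i) (w j)).coeff (m - a j - -a i) ≠ 0 := by
          intro h
          rw [h] at hcoeff
          simp at hcoeff
        have := hB (w i) (w j) _ hB'
        simp only [Equiv.Perm.inv_def, Equiv.symm_apply_apply] at this
        push_cast at this ⊢
        linarith
      · show mm * (N * B * mm) * mm⁻¹ = B
        rw [hinv]
        calc mm * (N * B * mm) * N = (mm * N) * B * (mm * N) := by
              simp only [Matrix.mul_assoc]
          _ = B := by rw [hmulN, one_mul, mul_one]
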